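/- Fix an integer k ≥ 1. Let d : ℤ^{2k+1} → ℤ^{2k} be the ℤ-linear map given by the 2k × (2k+1) integer matrix whose (a, b)-entry equals 2 if b is odd and a ∈ {b − 1, b}, and equals 0 otherwise (rows indexed 1 ≤ a ≤ 2k, columns 1 ≤ b ≤ 2k+1). Then the kernel of d is a free abelian group of rank k, and the cokernel of d is isomorphic to ℤ^{k−1} ⊕ (ℤ/2)^{k+1}. -/

import Mathlib

/-!
Statement 12: for `k ≥ 1`, the `ℤ`-linear map `d : ℤ^{2k+1} → ℤ^{2k}` given by
the `2k × (2k+1)` matrix whose `(a, b)`-entry (with `1 ≤ a ≤ 2k`,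
`1 ≤ b ≤ 2k+1`) is `2` if `b` is odd and `a ∈ {b - 1, b}`, and `0` otherwise,
has free kernel of rank `k` and cokernel `ℤ^{k-1} ⊕ (ℤ/2)^{k+1}`.
-/

/-- The `2k × (2k+1)` integer matrix whose `(a, b)`-entry (in `1`-based indexing,
rows `1 ≤ a ≤ 2k`, columns `1 ≤ b ≤ 2k+1`) equals `2` if the column index `b` is
odd and `a ∈ {b - 1, b}`, and `0` otherwise. -/
def dMinusOneMatrix (k : ℕ) : Matrix (Fin (2 * k)) (Fin (2 * k + 1)) ℤ :=
  fun a b =>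
    if (b.1 + 1) % 2 = 1 ∧ (a.1 + 1 = b.1 ∨ a.1 = b.1) then 2 else 0

/-- The `ℤ`-linear map `d : ℤ^{2k+1} → ℤ^{2k}` associated to the matrix. -/
noncomputable def dMinusOne (k : ℕ) : (Fin (2 * k + 1) → ℤ) →ₗ[ℤ] (Fin (2 * k) → ℤ) :=
  Matrix.toLin' (dMinusOneMatrix k)

lemma d_apply (k : ℕ) (x : Fin (2 * k + 1) → ℤ) (a : Fin (2 * k)) :
    dMinusOne k x a = 2 * x ⟨a.1 + a.1 % 2, by omega⟩ := by
  have ha := a.2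
  show (Matrix.toLin' (dMinusOneMatrix k)) x a = _
  rw [Matrix.toLin'_apply]
  show ∑ b, dMinusOneMatrix k a b * x b = _
  rw [Finset.sum_eq_single (⟨a.1 + a.1 % 2, by omega⟩ : Fin (2 * k + 1))]
  · unfold dMinusOneMatrix
    rw [if_pos (by constructor <;> (simp only [Fin.val_mk]; omega))]
  · intro b _ hb
    unfold dMinusOneMatrix
    rw [if_neg, zero_mul]
    rintro ⟨h1, h2⟩
    refine hb (Fin.ext ?_)
    simp only [Fin.val_mk]
    omega
  · intro h; exact absurd (Finset.mem_univ _) h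

lemma congr_idx {n : ℕ} (y : Fin n → ℤ) {i j : Fin n} (h : i.1 = j.1) : y i = y j := by
  rw [Fin.ext h]

lemma ker_even {k : ℕ} (hk : 1 ≤ k) {x : Fin (2 * k + 1) → ℤ}
    (hx : x ∈ LinearMap.ker (dMinusOne k)) (b : Fin (2 * k + 1)) (hb : b.1 % 2 = 0) :
    x b = 0 := by
  have hb2 := b.2
  have h := congrFun (LinearMap.mem_ker.1 hx) ⟨b.1 - 1, by omega⟩
  rw [d_apply] at h
  simp only [Pi.zero_apply] at h
  have : x ⟨b.1 - 1 + (b.1 - 1) % 2, by omega⟩ = x b :=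
    congr_idx x (by simp only [Fin.val_mk]; omega)
  omega

noncomputable def kerEquiv (k : ℕ) (hk : 1 ≤ k) :
    LinearMap.ker (dMinusOne k) ≃ₗ[ℤ] (Fin k → ℤ) := by
  refine LinearEquiv.ofLinear
    { toFun := fun x i => x.1 ⟨2 * i.1 + 1, by omega⟩
      map_add' := fun x y => rfl
      map_smul' := fun c x => rfl }
    { toFun := fun y => ⟨fun b => if h : b.1 % 2 = 1 then y ⟨b.1 / 2, by omega⟩ else 0, ?_⟩
      map_add' := fun u v => ?_
      map_smul' := fun c u => ?_ } ?_ ?_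
  · rw [LinearMap.mem_ker]
    funext a
    rw [d_apply]
    have ha := a.2
    rw [dif_neg (by simp only [Fin.val_mk]; omega), mul_zero]
    rfl
  · apply Subtype.ext
    funext b
    show (dite ((_ : ℕ) % 2 = 1) _ _ : ℤ) = dite ((_ : ℕ) % 2 = 1) _ _ + dite ((_ : ℕ) % 2 = 1) _ _
    split_ifs <;> simp
  · apply Subtype.ext
    funext b
    show (dite ((_ : ℕ) % 2 = 1) _ _ : ℤ) = c * dite ((_ : ℕ) % 2 = 1) _ _
    split_ifs <;> simp
  · apply LinearMap.ext
    intro y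
    funext i
    have hi := i.2
    show dite ((_ : ℕ) % 2 = 1) _ _ = y i
    rw [dif_pos (by simp only [Fin.val_mk]; omega)]
    exact congr_idx y (by simp only [Fin.val_mk]; omega)
  · apply LinearMap.ext
    intro x
    apply Subtype.ext
    funext b
    show dite ((_ : ℕ) % 2 = 1) _ _ = x.1 b
    have hb := b.2
    by_cases h : b.1 % 2 = 1
    · rw [dif_pos h]
      exact congr_idx x.1 (by simp only [Fin.val_mk]; omega)
    · rw [dif_neg h]
      exact (ker_even hk x.2 b (by omega)).symm

noncomputable def phi1 (k : ℕ) : (Fin (2 * k) → ℤ) →ₗ[ℤ] (Fin (k - 1) → ℤ) :=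
  LinearMap.pi fun i =>
    (LinearMap.proj ⟨2 * i.1 + 1, by have := i.2; omega⟩ :
        (Fin (2 * k) → ℤ) →ₗ[ℤ] ℤ) -
      (LinearMap.proj ⟨2 * i.1 + 2, by have := i.2; omega⟩ :
        (Fin (2 * k) → ℤ) →ₗ[ℤ] ℤ)

noncomputable def phi2 (k : ℕ) (hk : 1 ≤ k) : (Fin (2 * k) → ℤ) →ₗ[ℤ] (Fin (k + 1) → ZMod 2) :=
  LinearMap.pi fun j =>
    (Int.castAddHom (ZMod 2)).toIntLinearMap.comp
      (LinearMap.proj ⟨min (2 * j.1) (2 * k - 1), by omega⟩ :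
        (Fin (2 * k) → ℤ) →ₗ[ℤ] ℤ)

noncomputable def phi (k : ℕ) (hk : 1 ≤ k) :
    (Fin (2 * k) → ℤ) →ₗ[ℤ] (Fin (k - 1) → ℤ) × (Fin (k + 1) → ZMod 2) :=
  (phi1 k).prod (phi2 k hk)

lemma phi1_apply (k : ℕ) (y : Fin (2 * k) → ℤ) (i : Fin (k - 1)) :
    phi1 k y i = y ⟨2 * i.1 + 1, by have := i.2; omega⟩ - y ⟨2 * i.1 + 2, by have := i.2; omega⟩ := by
  simp [phi1]

lemma phi2_apply (k : ℕ) (hk : 1 ≤ k) (y : Fin (2 * k) → ℤ) (j : Fin (k + 1)) :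
    phi2 k hk y j = ((y ⟨min (2 * j.1) (2 * k - 1), by omega⟩ : ℤ) : ZMod 2) := by
  simp [phi2]



noncomputable def yrep (k : ℕ) (z : Fin (k - 1) → ℤ) (w : Fin (k + 1) → ZMod 2) :
    Fin (2 * k) → ℤ := fun b =>
  if h1 : b.1 = 2 * k - 1 then ((w ⟨k, by omega⟩).val : ℤ)
  else if h2 : b.1 % 2 = 0 then ((w ⟨b.1 / 2, by have := b.2; omega⟩).val : ℤ)
  else z ⟨b.1 / 2, by have := b.2; omega⟩ +
    ((w ⟨b.1 / 2 + 1, by have := b.2; omega⟩).val : ℤ)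

lemma yrep_last (k : ℕ) (z : Fin (k - 1) → ℤ) (w : Fin (k + 1) → ZMod 2) (b : Fin (2 * k))
    (h1 : b.1 = 2 * k - 1) : yrep k z w b = ((w ⟨k, by omega⟩).val : ℤ) := by
  unfold yrep; rw [dif_pos h1]

lemma yrep_even (k : ℕ) (z : Fin (k - 1) → ℤ) (w : Fin (k + 1) → ZMod 2) (b : Fin (2 * k))
    (h1 : b.1 ≠ 2 * k - 1) (h2 : b.1 % 2 = 0) :
    yrep k z w b = ((w ⟨b.1 / 2, by have := b.2; omega⟩).val : ℤ) := by
  unfold yrep; rw [dif_neg h1, dif_pos h2]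

lemma yrep_odd (k : ℕ) (z : Fin (k - 1) → ℤ) (w : Fin (k + 1) → ZMod 2) (b : Fin (2 * k))
    (h1 : b.1 ≠ 2 * k - 1) (h2 : b.1 % 2 = 1) :
    yrep k z w b = z ⟨b.1 / 2, by have := b.2; omega⟩ +
      ((w ⟨b.1 / 2 + 1, by have := b.2; omega⟩).val : ℤ) := by
  unfold yrep; rw [dif_neg h1, dif_neg (by omega)]

lemma phi_surj (k : ℕ) (hk : 1 ≤ k) : Function.Surjective (phi k hk) := by
  rintro ⟨z, w⟩
  refine ⟨yrep k z w, Prod.ext ?_ ?_⟩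
  · show phi1 k _ = z
    funext i
    have hi := i.2
    rw [phi1_apply,
      yrep_odd k z w _ (by simp only [Fin.val_mk]; omega) (by simp only [Fin.val_mk]; omega),
      yrep_even k z w _ (by simp only [Fin.val_mk]; omega) (by simp only [Fin.val_mk]; omega)]
    have e1 : (⟨(⟨2 * i.1 + 1, by omega⟩ : Fin (2 * k)).1 / 2, by simp only [Fin.val_mk]; omega⟩ : Fin (k - 1)) = i :=
      Fin.ext (by simp only [Fin.val_mk]; omega)
    have e2 : (⟨(⟨2 * i.1 + 1, by omega⟩ : Fin (2 * k)).1 / 2 + 1, by simp only [Fin.val_mk]; omega⟩ : Fin (k + 1)) =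
        ⟨(⟨2 * i.1 + 2, by omega⟩ : Fin (2 * k)).1 / 2, by simp only [Fin.val_mk]; omega⟩ :=
      Fin.ext (by simp only [Fin.val_mk]; omega)
    rw [e1]
    simp only [e2]
    ring
  · show phi2 k hk _ = w
    funext j
    have hj := j.2
    rw [phi2_apply]
    by_cases hjk : j.1 = k
    · rw [yrep_last k z w _ (by simp only [Fin.val_mk]; omega)]
      have : (⟨k, by omega⟩ : Fin (k + 1)) = j := Fin.ext (by simp only [Fin.val_mk]; omega)
      rw [this]
      push_cast
      simp
    · rw [yrep_even k z w _ (by simp only [Fin.val_mk]; omega) (by simp only [Fin.val_mk]; omega)]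
      have : (⟨(⟨min (2 * j.1) (2 * k - 1), by omega⟩ : Fin (2 * k)).1 / 2, by simp only [Fin.val_mk]; omega⟩ :
          Fin (k + 1)) = j := Fin.ext (by simp only [Fin.val_mk]; omega)
      rw [this]
      push_cast
      simp

lemma range_eq (k : ℕ) (hk : 1 ≤ k) :
    LinearMap.range (dMinusOne k) = LinearMap.ker (phi k hk) := by
  apply le_antisymm
  · rintro y ⟨x, rfl⟩
    rw [LinearMap.mem_ker]
    refine Prod.ext ?_ ?_
    · show phi1 k _ = 0
      funext i
      have hi := i.2
      rw [phi1_apply, d_apply, d_apply]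
      have e : (⟨(⟨2 * i.1 + 1, by omega⟩ : Fin (2 * k)).1 + (⟨2 * i.1 + 1, by omega⟩ : Fin (2 * k)).1 % 2, by simp only [Fin.val_mk]; omega⟩ : Fin (2 * k + 1)) =
          ⟨(⟨2 * i.1 + 2, by omega⟩ : Fin (2 * k)).1 + (⟨2 * i.1 + 2, by omega⟩ : Fin (2 * k)).1 % 2, by simp only [Fin.val_mk]; omega⟩ :=
        Fin.ext (by simp only [Fin.val_mk]; omega)
      simp only [e]
      show 2 * x _ - 2 * x _ = 0
      ring
    · show phi2 k hk _ = 0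
      funext j
      rw [phi2_apply, d_apply]
      push_cast
      exact mul_eq_zero_of_left (by decide) _
  · intro y hy
    rw [LinearMap.mem_ker] at hy
    have h1 : ∀ i : Fin (k - 1), y ⟨2 * i.1 + 1, by have := i.2; omega⟩ =
        y ⟨2 * i.1 + 2, by have := i.2; omega⟩ := by
      intro i
      have := congrFun (congrArg Prod.fst hy) i
      simp only [phi, LinearMap.prod_apply, Function.prod, Prod.fst_zero, Pi.zero_apply] at this
      rw [phi1_apply] at this
      simpa [sub_eq_zero] using this
    have h2 : ∀ j : Fin (k + 1), (2 : ℤ) ∣ y ⟨min (2 * j.1) (2 * k - 1), by omega⟩ := by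
      intro j
      have := congrFun (congrArg Prod.snd hy) j
      simp only [phi, LinearMap.prod_apply, Function.prod, Prod.snd_zero, Pi.zero_apply] at this
      rw [phi2_apply] at this
      simpa using (ZMod.intCast_zmod_eq_zero_iff_dvd _ 2).1 (by simpa using this)
    -- all entries are even
    have heven : ∀ b : Fin (2 * k), (2 : ℤ) ∣ y b := by
      intro b
      have hb := b.2
      by_cases hodd : b.1 % 2 = 1
      · by_cases hlast : b.1 = 2 * k - 1
        · have := h2 ⟨k, by omega⟩
          have e : (⟨min (2 * (⟨k, by omega⟩ : Fin (k + 1)).1) (2 * k - 1), by omega⟩ : Fin (2 * k)) = b :=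
            Fin.ext (by simp only [Fin.val_mk]; omega)
          rwa [e] at this
        · have hi : b.1 / 2 < k - 1 := by omega
          have h1' := h1 ⟨b.1 / 2, hi⟩
          have e : (⟨2 * (⟨b.1 / 2, hi⟩ : Fin (k - 1)).1 + 1, by simp only [Fin.val_mk]; omega⟩ : Fin (2 * k)) = b :=
            Fin.ext (by simp only [Fin.val_mk]; omega)
          rw [e] at h1'
          rw [h1']
          have := h2 ⟨b.1 / 2 + 1, by omega⟩
          have e2 : (⟨min (2 * (⟨b.1 / 2 + 1, by omega⟩ : Fin (k + 1)).1) (2 * k - 1), by omega⟩ : Fin (2 * k)) =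
              ⟨2 * (⟨b.1 / 2, hi⟩ : Fin (k - 1)).1 + 2, by simp only [Fin.val_mk]; omega⟩ :=
            Fin.ext (by simp only [Fin.val_mk]; omega)
          rwa [e2] at this
      · have := h2 ⟨b.1 / 2, by omega⟩
        have e : (⟨min (2 * (⟨b.1 / 2, by omega⟩ : Fin (k + 1)).1) (2 * k - 1), by omega⟩ : Fin (2 * k)) = b :=
          Fin.ext (by simp only [Fin.val_mk]; omega)
        rwa [e] at this
    refine ⟨fun b => if b.1 = 0 then y ⟨0, by omega⟩ / 2
      else if b.1 % 2 = 0 then y ⟨b.1 - 1, by have := b.2; omega⟩ / 2 else 0, ?_⟩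
    funext a
    rw [d_apply]
    have ha := a.2
    by_cases hpar : a.1 % 2 = 0
    · by_cases h0 : a.1 = 0
      · rw [if_pos (by simp only [Fin.val_mk]; omega)]
        have e2 : y ⟨(0 : ℕ), by omega⟩ = y a := congr_idx y (by simp only [Fin.val_mk]; omega)
        rw [e2]
        have := heven a
        omega
      · rw [if_neg (by simp only [Fin.val_mk]; omega), if_pos (by simp only [Fin.val_mk]; omega)]
        -- value is y ⟨a + a%2 - 1⟩ / 2 = y ⟨a - 1⟩ / 2 ; and y⟨a-1⟩ = y⟨a⟩ by h1
        have hi : (a.1 - 1) / 2 < k - 1 := by omega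
        have h1' := h1 ⟨(a.1 - 1) / 2, hi⟩
        have eL : y ⟨2 * ((a.1 - 1) / 2) + 1, by omega⟩ = y ⟨(⟨a.1 + a.1 % 2, by omega⟩ : Fin (2 * k + 1)).1 - 1, by simp only [Fin.val_mk]; omega⟩ :=
          congr_idx y (by simp only [Fin.val_mk]; omega)
        have eR : y ⟨2 * ((a.1 - 1) / 2) + 2, by omega⟩ = y a :=
          congr_idx y (by simp only [Fin.val_mk]; omega)
        simp only [Fin.val_mk] at h1' eL eR ⊢
        rw [← eL, h1', eR]
        have := heven a
        omega
    · rw [if_neg (by simp only [Fin.val_mk]; omega), if_pos (by simp only [Fin.val_mk]; omega)]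
      have e : y ⟨(⟨a.1 + a.1 % 2, by omega⟩ : Fin (2 * k + 1)).1 - 1, by simp only [Fin.val_mk]; omega⟩ = y a :=
        congr_idx y (by simp only [Fin.val_mk]; omega)
      rw [e]
      have := heven a
      omega

/-- For `k ≥ 1`, the kernel of `d` is free abelian of rank `k`
and the cokernel of `d` is isomorphic to `ℤ^{k-1} ⊕ (ℤ/2)^{k+1}`. -/
theorem dMinusOne_ker_coker (k : ℕ) (hk : 1 ≤ k) :
    Nonempty (LinearMap.ker (dMinusOne k) ≃ₗ[ℤ] (Fin k → ℤ)) ∧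
    Nonempty (((Fin (2 * k) → ℤ) ⧸ LinearMap.range (dMinusOne k)) ≃ₗ[ℤ]
      ((Fin (k - 1) → ℤ) × (Fin (k + 1) → ZMod 2))) := by
  refine ⟨⟨kerEquiv k hk⟩, ⟨?_⟩⟩
  exact (Submodule.quotEquivOfEq (LinearMap.range (dMinusOne k)) (LinearMap.ker (phi k hk))
      (range_eq k hk)).trans ((phi k hk).quotKerEquivOfSurjective (phi_surj k hk))
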